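/- Let T be a tree (a connected acyclic finite simple graph) with vertex v, let v_1, …, v_k be the vertices of T adjacent to v, and for each 1 ≤ i ≤ k let T_i be the connected component of the graph obtained from T by deleting the edge {v, v_i} that contains v_i (viewed as an induced subgraph of T). Then for every color c ∈ ℕ, one has the identity of formal power series Z_T^v(c) = x_c · Π_{i=1}^k ( X_{T_i} − Z_{T_i}^{v_i}(c) ) in MvPowerSeries ℕ ℤ. -/

import Mathlib

/-- A proper coloring of a simple graph by natural-number colors:
adjacent vertices receive distinct colors. -/
def SimpleGraph.IsProperNatColoring {V : Type} (G : SimpleGraph V) (κ : V → ℕ) : Prop :=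
  ∀ ⦃u w : V⦄, G.Adj u w → κ u ≠ κ w

/-- The chromatic symmetric function of `G`, as a formal power series in the
variables `(x_c)_{c : ℕ}` with integer coefficients: the coefficient on the
exponent vector `d : ℕ →₀ ℕ` is the number of proper colorings `κ` of `G`
with `|κ⁻¹(c)| = d c` for every color `c`. -/
noncomputable def csf {V : Type} (G : SimpleGraph V) : MvPowerSeries ℕ ℤ :=
  fun d => ((Set.ncard {κ : V → ℕ |
    G.IsProperNatColoring κ ∧ ∀ c : ℕ, (κ ⁻¹' {c}).ncard = d c} : ℕ) : ℤ)

/-- `Zcsf G v c` is the part of the chromatic symmetric function of `G`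
counting only the proper colorings `κ` with `κ v = c`. -/
noncomputable def Zcsf {V : Type} (G : SimpleGraph V) (v : V) (c : ℕ) : MvPowerSeries ℕ ℤ :=
  fun d => ((Set.ncard {κ : V → ℕ |
    G.IsProperNatColoring κ ∧ κ v = c ∧ ∀ c' : ℕ, (κ ⁻¹' {c'}).ncard = d c'} : ℕ) : ℤ)

/-- `branchSet T v u` is the vertex set of the connected component containing `u`
of the graph obtained from `T` by deleting the edge `{v, u}`. -/
def branchSet {V : Type} (T : SimpleGraph V) (v u : V) : Set V :=
  {w : V | (T.deleteEdges {s(v, u)}).Reachable w u}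

namespace ZTD

open SimpleGraph Finset

variable {V : Type} [Fintype V] [DecidableEq V]
variable {T : SimpleGraph V} {v u u' w w' : V}

/-! ### Graph-theoretic lemmas about branches of a tree -/

lemma bridge (hT : T.IsTree) (hu : T.Adj v u) :
    ¬ (T.deleteEdges {s(v, u)}).Reachable v u := by
  have h := (SimpleGraph.isAcyclic_iff_forall_adj_isBridge.mp hT.IsAcyclic) hu
  rw [SimpleGraph.isBridge_iff] at h
  exact h

lemma not_mem_branch (hT : T.IsTree) (hu : T.Adj v u) : v ∉ branchSet T v u :=
  fun h => bridge hT hu h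

lemma mem_branch_ne (hT : T.IsTree) (hu : T.Adj v u) (hw : w ∈ branchSet T v u) : w ≠ v := by
  rintro rfl; exact not_mem_branch hT hu hw

lemma branch_self : u ∈ branchSet T v u := SimpleGraph.Reachable.refl u

lemma adj_branch (hT : T.IsTree) (hu : T.Adj v u) (hw : w ∈ branchSet T v u)
    (h : T.Adj w w') (hw' : w' ≠ v) : w' ∈ branchSet T v u := by
  have hwv : w ≠ v := mem_branch_ne hT hu hw
  have hadj : (T.deleteEdges {s(v, u)}).Adj w' w := by
    rw [SimpleGraph.deleteEdges_adj]
    refine ⟨h.symm, ?_⟩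
    intro hmem
    rw [Set.mem_singleton_iff, Sym2.eq_iff] at hmem
    rcases hmem with ⟨h1, h2⟩ | ⟨h1, h2⟩
    · exact hw' h1
    · exact hwv h2
  exact hadj.reachable.trans hw

lemma cover_aux (hT : T.IsTree) :
    ∀ {a b : V} (_ : T.Walk a b), a ≠ b → ∃ u, T.Adj b u ∧ a ∈ branchSet T b u := by
  intro a b p
  induction p with
  | nil => intro h; exact absurd rfl h
  | @cons x y z h q ih =>
    intro hxz
    by_cases hy : y = z
    · subst hy; exact ⟨x, h.symm, branch_self⟩
    · obtain ⟨u, hu, hyB⟩ := ih hy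
      exact ⟨u, hu, adj_branch hT hu hyB h.symm hxz⟩

lemma cover (hT : T.IsTree) (hw : w ≠ v) : ∃ u, T.Adj v u ∧ w ∈ branchSet T v u := by
  obtain ⟨p⟩ := hT.isConnected.preconnected w v
  exact cover_aux hT p hw

lemma branch_walk (hT : T.IsTree) (hu : T.Adj v u) (hw : w ∈ branchSet T v u) :
    ∃ p : (T.deleteEdges {s(v, u)}).Walk w u, v ∉ p.support := by
  obtain ⟨p⟩ := hw
  by_cases hv : v ∈ p.support
  · exact absurd (p.dropUntil v hv).reachable (bridge hT hu)
  · exact ⟨p, hv⟩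

lemma branch_disjoint (hT : T.IsTree) (hu : T.Adj v u) (hu' : T.Adj v u') (hne : u ≠ u')
    (hw : w ∈ branchSet T v u) (hw' : w ∈ branchSet T v u') : False := by
  obtain ⟨p, hp⟩ := branch_walk hT hu hw
  have hedges : ∀ e ∈ p.edges, e ∈ (T.deleteEdges {s(v, u')}).edgeSet := by
    intro e he
    have h1 : e ∈ (T.deleteEdges {s(v, u)}).edgeSet := p.edges_subset_edgeSet he
    rw [SimpleGraph.edgeSet_deleteEdges] at h1 ⊢
    refine ⟨h1.1, ?_⟩
    intro h2
    rw [Set.mem_singleton_iff] at h2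
    subst h2
    exact hp (p.fst_mem_support_of_mem_edges he)
  have hreach : (T.deleteEdges {s(v, u')}).Reachable w u := (p.transfer _ hedges).reachable
  have hadj : (T.deleteEdges {s(v, u')}).Adj v u := by
    rw [SimpleGraph.deleteEdges_adj]
    refine ⟨hu, ?_⟩
    intro hmem
    rw [Set.mem_singleton_iff, Sym2.eq_iff] at hmem
    rcases hmem with ⟨h1, h2⟩ | ⟨h1, h2⟩
    · exact hne h2
    · exact T.loopless.irrefl v (h2 ▸ hu)
  exact bridge hT hu' (hadj.reachable.trans (hreach.symm.trans hw'))

/-- Pick the neighbor of `v` whose branch contains `w`. -/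
noncomputable def pick (hT : T.IsTree) (v w : V) (hw : w ≠ v) : V :=
  (cover hT hw).choose

lemma pick_spec (hT : T.IsTree) (hw : w ≠ v) :
    T.Adj v (pick hT v w hw) ∧ w ∈ branchSet T v (pick hT v w hw) :=
  (cover hT hw).choose_spec

lemma pick_eq (hT : T.IsTree) (hu : T.Adj v u) (hwB : w ∈ branchSet T v u) (hw : w ≠ v) :
    pick hT v w hw = u := by
  by_contra hne
  exact branch_disjoint hT (pick_spec hT hw).1 hu hne (pick_spec hT hw).2 hwB

/-! ### Counting colorings -/

/-- The color-count vector of a coloring. -/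
noncomputable def cnt {S : Type} [Finite S] (κ : S → ℕ) : ℕ →₀ ℕ :=
  Finsupp.ofSupportFinite (fun c' => (κ ⁻¹' {c'}).ncard)
    (by
      apply Set.Finite.subset (Set.finite_range κ)
      intro c' hc'
      rw [Function.mem_support] at hc'
      by_contra h
      apply hc'
      have : κ ⁻¹' {c'} = ∅ := by
        ext x; simp only [Set.mem_preimage, Set.mem_singleton_iff, Set.mem_empty_iff_false,
          iff_false]
        intro hx; exact h ⟨x, hx⟩
      rw [this, Set.ncard_empty])

lemma cnt_apply {S : Type} [Finite S] (κ : S → ℕ) (c' : ℕ) :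
    cnt κ c' = (κ ⁻¹' {c'}).ncard := rfl

lemma cnt_eq_iff {S : Type} [Finite S] (κ : S → ℕ) (e : ℕ →₀ ℕ) :
    cnt κ = e ↔ ∀ c', (κ ⁻¹' {c'}).ncard = e c' := by
  constructor
  · intro h c'; rw [← cnt_apply, h]
  · intro h; ext c'; rw [cnt_apply]; exact h c'

lemma cnt_pos {S : Type} [Finite S] (κ : S → ℕ) (x : S) : cnt κ (κ x) ≠ 0 := by
  rw [cnt_apply, Ne, Set.ncard_eq_zero (Set.toFinite _)]
  intro h
  have : x ∈ κ ⁻¹' {κ x} := rfl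
  rw [h] at this
  exact this

lemma cnt_eq_sum {S : Type} [Fintype S] (κ : S → ℕ) :
    cnt κ = ∑ x : S, Finsupp.single (κ x) 1 := by
  classical
  ext c'
  rw [Finsupp.finset_sum_apply, cnt_apply]
  have h1 : κ ⁻¹' {c'} = ↑(Finset.univ.filter (fun x => κ x = c')) := by
    ext x; simp
  rw [h1, Set.ncard_coe_finset, Finset.card_filter]
  apply Finset.sum_congr rfl
  intro x _
  rw [Finsupp.single_apply]

lemma counts_finite {S : Type} [Finite S] (e : ℕ →₀ ℕ) :
    {κ : S → ℕ | ∀ c', (κ ⁻¹' {c'}).ncard = e c'}.Finite := by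
  have h := Set.Finite.pi (ι := S) (t := fun _ => (↑e.support : Set ℕ))
    (fun _ => e.support.finite_toSet)
  apply h.subset
  intro κ hκ
  intro x _
  have h2 := hκ (κ x)
  have h3 : (κ ⁻¹' {κ x}).ncard ≠ 0 := cnt_pos κ x
  rw [h2] at h3
  simpa using h3

lemma cnt_finite_setOf {S : Type} [Finite S] (e : ℕ →₀ ℕ) (P : (S → ℕ) → Prop) :
    {κ : S → ℕ | P κ ∧ ∀ c', (κ ⁻¹' {c'}).ncard = e c'}.Finite :=
  (counts_finite e).subset (fun _ h => h.2)

end ZTD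

section Main

open SimpleGraph Finset ZTD

variable {V : Type} [Fintype V] [DecidableEq V]
variable (T : SimpleGraph V) (v : V) (c : ℕ)

/-- The set of proper colorings of the branch `branchSet T v u` that avoid color `c`
at `u` and have count vector `e`. -/
def Sset (u : V) (e : ℕ →₀ ℕ) : Set (↥(branchSet T v u) → ℕ) :=
  {κ | (SimpleGraph.induce (branchSet T v u) T).IsProperNatColoring κ ∧
    κ ⟨u, SimpleGraph.Reachable.refl u⟩ ≠ c ∧ ZTD.cnt κ = e}

/-- The set of colorings counted by the coefficient of `Zcsf T v c`. -/
def colA (d : ℕ →₀ ℕ) : Set (V → ℕ) :=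
  {κ | T.IsProperNatColoring κ ∧ κ v = c ∧ ZTD.cnt κ = d}

variable [DecidableRel T.Adj]

/-- The type of families of colorings of the branches at `v`. -/
abbrev FamT : Type :=
  (u : ↥(T.neighborFinset v)) → (↥(branchSet T v u.1) → ℕ)

/-- Families of proper colorings of the branches, avoiding `c` at the root of each
branch, with total count vector `d'`. -/
def Fam (d' : ℕ →₀ ℕ) : Set (FamT T v) :=
  {F | (∀ u : ↥(T.neighborFinset v),
      (SimpleGraph.induce (branchSet T v u.1) T).IsProperNatColoring (F u) ∧
      F u ⟨u.1, SimpleGraph.Reachable.refl u.1⟩ ≠ c) ∧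
    ∑ u ∈ (T.neighborFinset v).attach, ZTD.cnt (F u) = d'}

namespace ZTD2

open ZTD

variable {T v}

/-- Restriction of a global coloring to the branches. -/
def res (κ : V → ℕ) : FamT T v := fun _ x => κ x.1

/-- Gluing branch colorings into a global coloring. -/
noncomputable def glue (hT : T.IsTree) (F : FamT T v) : V → ℕ := fun w =>
  if h : w = v then c
  else F ⟨pick hT v w h, (T.mem_neighborFinset v _).mpr (pick_spec hT h).1⟩
    ⟨w, (pick_spec hT h).2⟩

lemma glue_eq (hT : T.IsTree) (F : FamT T v) {w u : V} (hw : w ≠ v) (hu : T.Adj v u)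
    (hwB : w ∈ branchSet T v u) :
    glue c hT F w = F ⟨u, (T.mem_neighborFinset v u).mpr hu⟩ ⟨w, hwB⟩ := by
  rw [glue, dif_neg hw]
  have hp : pick hT v w hw = u := pick_eq hT hu hwB hw
  subst hp
  rfl

lemma glue_v (hT : T.IsTree) (F : FamT T v) : glue c hT F v = c := dif_pos rfl

lemma res_glue (hT : T.IsTree) (F : FamT T v) : res (glue c hT F) = F := by
  funext u x
  have hu : T.Adj v u.1 := (T.mem_neighborFinset v u.1).mp u.2
  have hxv : x.1 ≠ v := mem_branch_ne hT hu x.2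
  show glue c hT F x.1 = F u x
  rw [glue_eq c hT F hxv hu x.2]

lemma cnt_split (hT : T.IsTree) (κ : V → ℕ) :
    ZTD.cnt κ = Finsupp.single (κ v) 1 +
      ∑ u ∈ (T.neighborFinset v).attach,
        ZTD.cnt (fun x : ↥(branchSet T v u.1) => κ x.1) := by
  classical
  rw [cnt_eq_sum κ]
  have hvnot : v ∉ (T.neighborFinset v).biUnion (fun u => (branchSet T v u).toFinset) := by
    simp only [Finset.mem_biUnion, Set.mem_toFinset, not_exists]
    intro u hu
    exact not_mem_branch hT ((T.mem_neighborFinset v u).mp hu.1) hu.2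
  have hpart : (Finset.univ : Finset V) =
      insert v ((T.neighborFinset v).biUnion (fun u => (branchSet T v u).toFinset)) := by
    ext x
    simp only [Finset.mem_univ, true_iff, Finset.mem_insert, Finset.mem_biUnion,
      Set.mem_toFinset]
    by_cases hx : x = v
    · exact Or.inl hx
    · obtain ⟨u, hu, hxB⟩ := cover hT hx
      exact Or.inr ⟨u, (T.mem_neighborFinset v u).mpr hu, hxB⟩
  have hdisj : ((T.neighborFinset v : Set V)).PairwiseDisjoint
      (fun u => (branchSet T v u).toFinset) := by
    intro a ha b hb hab
    rw [Function.onFun, Finset.disjoint_left]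
    intro x hxa hxb
    rw [Set.mem_toFinset] at hxa hxb
    rw [Finset.mem_coe] at ha hb
    exact branch_disjoint hT ((T.mem_neighborFinset v a).mp ha)
      ((T.mem_neighborFinset v b).mp hb) hab hxa hxb
  rw [show (∑ x : V, Finsupp.single (κ x) 1) = ∑ x ∈ Finset.univ, Finsupp.single (κ x) 1
    from rfl, hpart, Finset.sum_insert hvnot, Finset.sum_biUnion hdisj]
  congr 1
  rw [Finset.sum_attach (T.neighborFinset v)
    (fun u => ZTD.cnt (fun x : ↥(branchSet T v u) => κ x.1))]
  apply Finset.sum_congr rfl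
  intro u _
  exact ((cnt_eq_sum (fun x : ↥(branchSet T v u) => κ x.1)).trans
    (Finset.sum_set_coe (f := fun x => Finsupp.single (κ x) 1) (branchSet T v u))).symm

lemma res_mem_Fam (hT : T.IsTree) {d : ℕ →₀ ℕ} {κ : V → ℕ} (hκ : κ ∈ colA T v c d) :
    res κ ∈ Fam T v c (d - Finsupp.single c 1) := by
  obtain ⟨hprop, hv, hcnt⟩ := hκ
  constructor
  · intro u
    constructor
    · intro a b hab
      exact hprop hab
    · have hu : T.Adj v u.1 := (T.mem_neighborFinset v u.1).mp u.2
      have := hprop hu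
      rw [hv] at this
      exact fun h => this h.symm
  · have hsplit := cnt_split (v := v) hT κ
    rw [hv] at hsplit
    rw [hcnt] at hsplit
    rw [hsplit, add_tsub_cancel_left]
    rfl

lemma glue_mem_colA (hT : T.IsTree) {d : ℕ →₀ ℕ} (hd : Finsupp.single c 1 ≤ d)
    {F : FamT T v} (hF : F ∈ Fam T v c (d - Finsupp.single c 1)) :
    glue c hT F ∈ colA T v c d := by
  obtain ⟨hFu, hsum⟩ := hF
  refine ⟨?_, glue_v c hT F, ?_⟩
  · intro a b hab
    by_cases ha : a = v
    · rw [ha] at hab ⊢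
      have hb : b ≠ v := fun h => T.loopless.irrefl v (h ▸ hab)
      rw [glue_v c hT F, glue_eq c hT F hb hab branch_self]
      exact fun h => (hFu ⟨b, (T.mem_neighborFinset v b).mpr hab⟩).2 h.symm
    · by_cases hb : b = v
      · rw [hb] at hab ⊢
        have hvb : T.Adj v a := hab.symm
        rw [glue_v c hT F, glue_eq c hT F ha hvb branch_self]
        exact (hFu ⟨a, (T.mem_neighborFinset v a).mpr hvb⟩).2
      · have hu : T.Adj v (pick hT v a ha) := (pick_spec hT ha).1
        have haB : a ∈ branchSet T v (pick hT v a ha) := (pick_spec hT ha).2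
        have hbB : b ∈ branchSet T v (pick hT v a ha) := adj_branch hT hu haB hab hb
        rw [glue_eq c hT F ha hu haB, glue_eq c hT F hb hu hbB]
        exact (hFu _).1 hab
  · have hsplit := cnt_split (v := v) hT (glue c hT F)
    rw [glue_v c hT F] at hsplit
    have hres : ∀ u ∈ (T.neighborFinset v).attach,
        ZTD.cnt (fun x : ↥(branchSet T v u.1) => glue c hT F x.1) = ZTD.cnt (F u) := by
      intro u _
      congr 1
      have := res_glue c hT F
      exact congrFun this u
    rw [Finset.sum_congr rfl hres, hsum] at hsplit
    rw [hsplit, add_tsub_cancel_of_le hd]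

lemma card_colA (hT : T.IsTree) (d : ℕ →₀ ℕ) (hd : Finsupp.single c 1 ≤ d) :
    (colA T v c d).ncard = (Fam T v c (d - Finsupp.single c 1)).ncard := by
  rw [← Nat.card_coe_set_eq, ← Nat.card_coe_set_eq]
  apply Nat.card_congr
  refine Equiv.ofBijective (fun κ => ⟨res κ.1, res_mem_Fam c hT κ.2⟩) ⟨?_, ?_⟩
  · rintro ⟨κ, hκ⟩ ⟨κ', hκ'⟩ h
    simp only [Subtype.mk.injEq] at h ⊢
    funext x
    by_cases hx : x = v
    · subst hx; rw [hκ.2.1, hκ'.2.1]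
    · have hu : T.Adj v (pick hT v x hx) := (pick_spec hT hx).1
      have hxB : x ∈ branchSet T v (pick hT v x hx) := (pick_spec hT hx).2
      have := congrFun (congrFun h ⟨pick hT v x hx, (T.mem_neighborFinset v _).mpr hu⟩)
        ⟨x, hxB⟩
      exact this
  · rintro ⟨F, hF⟩
    exact ⟨⟨glue c hT F, glue_mem_colA c hT hd hF⟩, Subtype.ext (res_glue c hT F)⟩

lemma Fam_finite (d' : ℕ →₀ ℕ) : (Fam T v c d').Finite := by
  classical
  have hinner : ∀ (S : Type) [Finite S], {κ : S → ℕ | ∀ x, κ x ∈ (↑d'.support : Set ℕ)}.Finite := by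
    intro S _
    have h := Set.Finite.pi (ι := S) (t := fun _ => (↑d'.support : Set ℕ))
      (fun _ => d'.support.finite_toSet)
    apply h.subset
    intro κ hκ x _
    exact hκ x
  have h := Set.Finite.pi (ι := ↥(T.neighborFinset v))
    (t := fun u => {κ : ↥(branchSet T v u.1) → ℕ | ∀ x, κ x ∈ (↑d'.support : Set ℕ)})
    (fun u => hinner _)
  apply h.subset
  intro F hF u _
  intro x
  have hle : ZTD.cnt (F u) ≤ d' := by
    rw [← hF.2]
    exact Finset.single_le_sum (f := fun u => ZTD.cnt (F u)) (fun _ _ => zero_le)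
      (Finset.mem_attach _ u)
  have h1 : ZTD.cnt (F u) (F u x) ≠ 0 := cnt_pos (F u) x
  have h2 : ZTD.cnt (F u) (F u x) ≤ d' (F u x) := hle (F u x)
  simp only [Finset.coe_sort_coe, Finset.mem_coe, Finsupp.mem_support_iff]
  omega

lemma card_Fam (d' : ℕ →₀ ℕ) :
    (Fam T v c d').ncard = ∑ l ∈ Finset.finsuppAntidiag (T.neighborFinset v) d',
      ∏ u ∈ T.neighborFinset v, (Sset T v c u (l u)).ncard := by
  classical
  have hfin := Fam_finite (T := T) (v := v) (c := c) d'
  have hmaps : ∀ F ∈ hfin.toFinset,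
      (Finsupp.onFinset (T.neighborFinset v)
        (fun u => if hu : u ∈ T.neighborFinset v then ZTD.cnt (F ⟨u, hu⟩) else 0)
        (fun u h => by by_contra hc; exact h (by simp [hc]))) ∈
      Finset.finsuppAntidiag (T.neighborFinset v) d' := by
    intro F hF
    rw [Set.Finite.mem_toFinset] at hF
    rw [Finset.mem_finsuppAntidiag]
    constructor
    · rw [← Finset.sum_attach (T.neighborFinset v)]
      rw [← hF.2]
      apply Finset.sum_congr rfl
      intro u _
      simp only [Finsupp.onFinset_apply, dif_pos u.2]
    · exact Finsupp.support_onFinset_subset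
  rw [Set.ncard_eq_toFinset_card _ hfin,
    Finset.card_eq_sum_card_fiberwise hmaps]
  apply Finset.sum_congr rfl
  intro l hl
  rw [Finset.mem_finsuppAntidiag] at hl
  -- the fiber over l is the set of families with F u ∈ Sset for all u
  have hset : (↑(hfin.toFinset.filter (fun F =>
      (Finsupp.onFinset (T.neighborFinset v)
        (fun u => if hu : u ∈ T.neighborFinset v then ZTD.cnt (F ⟨u, hu⟩) else 0)
        (fun u h => by by_contra hc; exact h (by simp [hc]))) = l)) : Set (FamT T v)) =
      {F : FamT T v | ∀ u : ↥(T.neighborFinset v), F u ∈ Sset T v c u.1 (l u.1)} := by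
    ext F
    simp only [Finset.coe_filter, Set.mem_setOf_eq, Set.Finite.mem_toFinset]
    constructor
    · rintro ⟨hF, hlF⟩ u
      refine ⟨(hF.1 u).1, (hF.1 u).2, ?_⟩
      have := congrFun (congrArg (⇑) hlF) u.1
      simp only [Finsupp.onFinset_apply, dif_pos u.2] at this
      exact this
    · intro hS
      refine ⟨⟨fun u => ⟨(hS u).1, (hS u).2.1⟩, ?_⟩, ?_⟩
      · rw [show ∑ u ∈ (T.neighborFinset v).attach, ZTD.cnt (F u) =
          ∑ u ∈ (T.neighborFinset v).attach, l u.1 from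
            Finset.sum_congr rfl (fun u _ => (hS u).2.2),
          Finset.sum_attach (T.neighborFinset v) (fun u => l u), hl.1]
      · ext u a'
        by_cases hu : u ∈ T.neighborFinset v
        · simp only [Finsupp.onFinset_apply, dif_pos hu]
          exact DFunLike.congr_fun (hS ⟨u, hu⟩).2.2 a'
        · simp only [Finsupp.onFinset_apply, dif_neg hu]
          have hlu : l u = 0 := by
            by_contra hne
            exact hu (hl.2 (Finsupp.mem_support_iff.mpr hne))
          simp [hlu]
  rw [← Set.ncard_coe_finset, hset]
  rw [← Nat.card_coe_set_eq]
  have hequiv : ↥{F : FamT T v | ∀ u : ↥(T.neighborFinset v), F u ∈ Sset T v c u.1 (l u.1)} ≃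
      ((u : ↥(T.neighborFinset v)) → ↥(Sset T v c u.1 (l u.1))) :=
    { toFun := fun F u => ⟨F.1 u, F.2 u⟩
      invFun := fun G => ⟨fun u => (G u).1, fun u => (G u).2⟩
      left_inv := fun _ => rfl
      right_inv := fun _ => rfl }
  rw [Nat.card_congr hequiv, Nat.card_pi]
  rw [show (∏ u : ↥(T.neighborFinset v), Nat.card ↥(Sset T v c u.1 (l u.1))) =
      ∏ u : ↥(T.neighborFinset v),
        (fun w => (Sset T v c w (l w)).ncard) u.1 from
    Finset.prod_congr rfl (fun u _ => Nat.card_coe_set_eq _),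
    Finset.prod_coe_sort (T.neighborFinset v) (fun w => (Sset T v c w (l w)).ncard)]

lemma coeff_sub_eq (u : V) (e : ℕ →₀ ℕ) :
    MvPowerSeries.coeff e (csf (SimpleGraph.induce (branchSet T v u) T)
      - Zcsf (SimpleGraph.induce (branchSet T v u) T)
          ⟨u, SimpleGraph.Reachable.refl u⟩ c) = ((Sset T v c u e).ncard : ℤ) := by
  rw [map_sub]
  have hX : MvPowerSeries.coeff e (csf (SimpleGraph.induce (branchSet T v u) T)) =
      ((Set.ncard {κ : ↥(branchSet T v u) → ℕ |
        (SimpleGraph.induce (branchSet T v u) T).IsProperNatColoring κ ∧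
        ∀ c' : ℕ, (κ ⁻¹' {c'}).ncard = e c'} : ℕ) : ℤ) := rfl
  have hY : MvPowerSeries.coeff e (Zcsf (SimpleGraph.induce (branchSet T v u) T)
      ⟨u, SimpleGraph.Reachable.refl u⟩ c) =
      ((Set.ncard {κ : ↥(branchSet T v u) → ℕ |
        (SimpleGraph.induce (branchSet T v u) T).IsProperNatColoring κ ∧
        κ ⟨u, SimpleGraph.Reachable.refl u⟩ = c ∧
        ∀ c' : ℕ, (κ ⁻¹' {c'}).ncard = e c'} : ℕ) : ℤ) := rfl
  rw [hX, hY]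
  set G := SimpleGraph.induce (branchSet T v u) T
  set X := {κ : ↥(branchSet T v u) → ℕ | G.IsProperNatColoring κ ∧
    ∀ c' : ℕ, (κ ⁻¹' {c'}).ncard = e c'}
  set Y := {κ : ↥(branchSet T v u) → ℕ | G.IsProperNatColoring κ ∧
    κ ⟨u, SimpleGraph.Reachable.refl u⟩ = c ∧ ∀ c' : ℕ, (κ ⁻¹' {c'}).ncard = e c'}
  have hS : Sset T v c u e = {κ : ↥(branchSet T v u) → ℕ | G.IsProperNatColoring κ ∧
      (κ ⟨u, SimpleGraph.Reachable.refl u⟩ ≠ c ∧ ∀ c' : ℕ, (κ ⁻¹' {c'}).ncard = e c')} := by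
    ext κ
    simp only [Sset, Set.mem_setOf_eq, cnt_eq_iff, and_assoc]
    exact Iff.rfl
  have hXsplit : X = Y ∪ {κ : ↥(branchSet T v u) → ℕ | G.IsProperNatColoring κ ∧
      (κ ⟨u, SimpleGraph.Reachable.refl u⟩ ≠ c ∧ ∀ c' : ℕ, (κ ⁻¹' {c'}).ncard = e c')} := by
    ext κ
    simp only [X, Y, Set.mem_setOf_eq, Set.mem_union]
    by_cases hκ : κ ⟨u, SimpleGraph.Reachable.refl u⟩ = c <;> tauto
  have hYfin : Y.Finite := by
    apply (counts_finite e).subset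
    intro κ hκ; exact hκ.2.2
  have hZfin : {κ : ↥(branchSet T v u) → ℕ | G.IsProperNatColoring κ ∧
      (κ ⟨u, SimpleGraph.Reachable.refl u⟩ ≠ c ∧ ∀ c' : ℕ, (κ ⁻¹' {c'}).ncard = e c')}.Finite := by
    apply (counts_finite e).subset
    intro κ hκ; exact hκ.2.2
  have hdisj : Disjoint Y {κ : ↥(branchSet T v u) → ℕ | G.IsProperNatColoring κ ∧
      (κ ⟨u, SimpleGraph.Reachable.refl u⟩ ≠ c ∧ ∀ c' : ℕ, (κ ⁻¹' {c'}).ncard = e c')} := by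
    rw [Set.disjoint_left]
    rintro κ hκY hκZ
    exact hκZ.2.1 hκY.2.1
  rw [hS, hXsplit, Set.ncard_union_eq hdisj hYfin hZfin]
  push_cast
  ring

end ZTD2

end Main

open SimpleGraph Finset ZTD ZTD2

/-- For a tree `T` with vertex `v`, letting `T_i` be the connected component
containing the neighbor `u` of `v` in `T` minus the edge `{v, u}`, one has
`Z_T^v(c) = x_c · Π_u (X_{T_u} − Z_{T_u}^{u}(c))`, the product over neighbors `u` of `v`. -/
theorem Zcsf_tree_decomposition {V : Type} [Fintype V] [DecidableEq V]
    (T : SimpleGraph V) [DecidableRel T.Adj] (hT : T.IsTree) (v : V) (c : ℕ) :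
    Zcsf T v c = (MvPowerSeries.X c : MvPowerSeries ℕ ℤ) *
      ∏ u ∈ T.neighborFinset v,
        (csf (SimpleGraph.induce (branchSet T v u) T)
          - Zcsf (SimpleGraph.induce (branchSet T v u) T)
              ⟨u, by exact SimpleGraph.Reachable.refl u⟩ c) := by
  apply MvPowerSeries.ext
  intro d
  rw [MvPowerSeries.X_def, MvPowerSeries.coeff_monomial_mul]
  have hL : MvPowerSeries.coeff d (Zcsf T v c) =
      ((Set.ncard {κ : V → ℕ | T.IsProperNatColoring κ ∧ κ v = c ∧
        ∀ c' : ℕ, (κ ⁻¹' {c'}).ncard = d c'} : ℕ) : ℤ) := rfl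
  have hAeq : {κ : V → ℕ | T.IsProperNatColoring κ ∧ κ v = c ∧
      ∀ c' : ℕ, (κ ⁻¹' {c'}).ncard = d c'} = colA T v c d := by
    ext κ
    simp only [colA, Set.mem_setOf_eq, cnt_eq_iff]
  rw [hL, hAeq]
  split_ifs with h
  · rw [one_mul, MvPowerSeries.coeff_prod]
    have hterm : ∀ l ∈ Finset.finsuppAntidiag (T.neighborFinset v) (d - Finsupp.single c 1),
        (∏ u ∈ T.neighborFinset v, MvPowerSeries.coeff (l u)
          (csf (SimpleGraph.induce (branchSet T v u) T)
            - Zcsf (SimpleGraph.induce (branchSet T v u) T)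
                ⟨u, by exact SimpleGraph.Reachable.refl u⟩ c)) =
        ((∏ u ∈ T.neighborFinset v, (Sset T v c u (l u)).ncard : ℕ) : ℤ) := by
      intro l _
      push_cast
      exact Finset.prod_congr rfl (fun u _ => coeff_sub_eq (T := T) (v := v) (c := c) u (l u))
    rw [Finset.sum_congr rfl hterm]
    rw [← Nat.cast_sum]
    rw [← card_Fam (T := T) (v := v) (c := c) (d - Finsupp.single c 1)]
    rw [← card_colA c hT d h]
  · -- if `single c 1 ≤ d` fails then there are no colorings with `κ v = c`
    have : colA T v c d = ∅ := by
      ext κ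
      simp only [colA, Set.mem_setOf_eq, Set.mem_empty_iff_false, iff_false]
      rintro ⟨hprop, hv, hcnt⟩
      apply h
      rw [Finsupp.single_le_iff]
      have h1 : ZTD.cnt κ c ≠ 0 := by
        rw [show c = κ v from hv.symm]
        exact cnt_pos κ v
      rw [hcnt] at h1
      exact Nat.one_le_iff_ne_zero.mpr h1
    rw [this, Set.ncard_empty, Nat.cast_zero]
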